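/- Fix N ≥ 2 and let σ₁,…,σ_N : ℝ → ℝ each be equal on ℝ to its Taylor series at 0; set f_i(x) := ∑_{t≥0} (|σ_i^{(t)}(0)|/t!) x^t, and assume each of these series converges for all x ∈ ℝ. Then the bivariate function K_N on I × I defined by K_N(X, X') := (f_N ∘ ⋯ ∘ f₂)(∑_{i=1}^n f₁(⟨X_i, X'_i⟩_{ℝ^d})) is a positive semi-definite kernel on I: it is symmetric and continuous, and for every m ≥ 1, every X^1,…,X^m ∈ I and every c₁,…,c_m ∈ ℝ, ∑_{j,k=1}^m c_j c_k K_N(X^j, X^k) ≥ 0. -/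

import Mathlib

open scoped BigOperators

/-- `taylorAbs σ x = ∑_{t≥0} (|σ^{(t)}(0)|/t!) x^t`, the series of `σ` with absolute values
of the Taylor coefficients. -/
noncomputable def taylorAbs (σ : ℝ → ℝ) (x : ℝ) : ℝ :=
  ∑' t : ℕ, (|iteratedDeriv t σ 0| / (t.factorial : ℝ)) * x ^ t

/-- `compTail f N = f N ∘ ⋯ ∘ f 2` (identity for `N ≤ 1`). -/
noncomputable def compTail (f : ℕ → ℝ → ℝ) : ℕ → ℝ → ℝ
  | 0 => id
  | 1 => id
  | (k + 2) => f (k + 2) ∘ compTail f (k + 1)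

/-- The multi-layer kernel
`K_N(X, X') = (f_N ∘ ⋯ ∘ f₂)(∑_{i=1}^n f₁(⟨X_i, X'_i⟩))` on `I = (S^{d-1})^n`,
where `f_i(x) = ∑_t (|σ_i^{(t)}(0)|/t!) x^t`. -/
noncomputable def cnnKernel (d n N : ℕ) (σ : ℕ → ℝ → ℝ)
    (X X' : Fin n → Metric.sphere (0 : EuclideanSpace ℝ (Fin d)) 1) : ℝ :=
  compTail (fun i => taylorAbs (σ i)) N
    (∑ j : Fin n,
      taylorAbs (σ 1)
        ((inner ℝ ((X j : EuclideanSpace ℝ (Fin d))) ((X' j : EuclideanSpace ℝ (Fin d))) : ℝ)))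


/-- Quadratic-form positive semidefiniteness for real matrices given as functions. -/
def PSDMat {m : ℕ} (M : Fin m → Fin m → ℝ) : Prop :=
  (∀ j k, M j k = M k j) ∧ ∀ c : Fin m → ℝ, 0 ≤ ∑ j, ∑ k, c j * c k * M j k

lemma quadform_eq {m : ℕ} (M : Fin m → Fin m → ℝ) (c : Fin m → ℝ) :
    dotProduct (star c) ((Matrix.of M).mulVec c) = ∑ j, ∑ k, c j * c k * M j k := by
  simp only [dotProduct, Matrix.mulVec, Pi.star_apply, star_trivial, Matrix.of_apply,
    Finset.mul_sum]
  exact Finset.sum_congr rfl fun j _ => Finset.sum_congr rfl fun k _ => by ring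

lemma psdMat_iff {m : ℕ} (M : Fin m → Fin m → ℝ) :
    PSDMat M ↔ (Matrix.of M).PosSemidef := by
  rw [Matrix.posSemidef_iff_dotProduct_mulVec]
  constructor
  · rintro ⟨hs, hq⟩
    refine ⟨?_, fun c => (quadform_eq M c) ▸ hq c⟩
    ext j k
    simp [Matrix.conjTranspose_apply, hs j k]
  · rintro ⟨hh, hq⟩
    refine ⟨fun j k => ?_, fun c => (quadform_eq M c) ▸ hq c⟩
    have := congrFun (congrFun hh j) k
    simpa [Matrix.conjTranspose_apply] using this.symm

lemma PSDMat.mul {m : ℕ} {M N : Fin m → Fin m → ℝ} (hM : PSDMat M) (hN : PSDMat N) :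
    PSDMat (fun j k => M j k * N j k) := by
  obtain ⟨m', B, hB⟩ := Matrix.posSemidef_iff_eq_sum_vecMulVec.mp ((psdMat_iff M).mp hM)
  have hMB : ∀ j k, M j k = ∑ r, B r j * B r k := by
    intro j k
    have := congrFun (congrFun hB j) k
    simpa [Matrix.sum_apply, Matrix.vecMulVec_apply] using this
  refine ⟨fun j k => by simp only [hM.1 j k, hN.1 j k], fun c => ?_⟩
  have key : ∑ j, ∑ k, c j * c k * (M j k * N j k)
      = ∑ r, ∑ j, ∑ k, (c j * B r j) * (c k * B r k) * N j k := by
    have h1 : ∀ j k, c j * c k * (M j k * N j k)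
        = ∑ r, (c j * B r j) * (c k * B r k) * N j k := by
      intro j k
      rw [hMB j k, Finset.sum_mul, Finset.mul_sum]
      exact Finset.sum_congr rfl fun r _ => by ring
    simp_rw [h1]
    rw [show (∑ j, ∑ k, ∑ r, (c j * B r j) * (c k * B r k) * N j k)
        = ∑ j, ∑ r, ∑ k, (c j * B r j) * (c k * B r k) * N j k from
      Finset.sum_congr rfl fun j _ => Finset.sum_comm]
    exact Finset.sum_comm
  rw [key]
  exact Finset.sum_nonneg fun r _ => hN.2 (fun j => c j * B r j)

lemma PSDMat.pow {m : ℕ} {M : Fin m → Fin m → ℝ} (hM : PSDMat M) (t : ℕ) :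
    PSDMat (fun j k => M j k ^ t) := by
  induction t with
  | zero =>
    refine ⟨fun _ _ => rfl, fun c => ?_⟩
    have : ∑ j, ∑ k, c j * c k * M j k ^ 0 = (∑ j, c j) ^ 2 := by
      rw [sq, Finset.sum_mul_sum]
      simp
    rw [this]; exact sq_nonneg _
  | succ t ih =>
    have := ih.mul hM
    simpa [pow_succ] using this

lemma PSDMat.tsumPow {m : ℕ} {M : Fin m → Fin m → ℝ} (hM : PSDMat M) (a : ℕ → ℝ)
    (ha : ∀ t, 0 ≤ a t) (hsum : ∀ x : ℝ, Summable fun t => a t * x ^ t) :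
    PSDMat (fun j k => ∑' t : ℕ, a t * M j k ^ t) := by
  refine ⟨fun j k => by simp only [hM.1 j k], fun c => ?_⟩
  have hs : ∀ j k : Fin m, Summable fun t => c j * c k * (a t * M j k ^ t) :=
    fun j k => (hsum (M j k)).mul_left _
  have key : ∑ j, ∑ k, c j * c k * (∑' t : ℕ, a t * M j k ^ t)
      = ∑' t : ℕ, ∑ j, ∑ k, c j * c k * (a t * M j k ^ t) := by
    have h1 : ∀ j k : Fin m, c j * c k * (∑' t : ℕ, a t * M j k ^ t)
        = ∑' t : ℕ, c j * c k * (a t * M j k ^ t) := fun j k => (tsum_mul_left).symm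
    simp_rw [h1]
    have h2 : ∀ j : Fin m, ∑ k, ∑' t : ℕ, c j * c k * (a t * M j k ^ t)
        = ∑' t : ℕ, ∑ k, c j * c k * (a t * M j k ^ t) := fun j =>
      (Summable.tsum_finsetSum fun k _ => hs j k).symm
    simp_rw [h2]
    exact (Summable.tsum_finsetSum fun j _ => summable_sum fun k _ => hs j k).symm
  rw [key]
  refine tsum_nonneg fun t => ?_
  have h3 : ∑ j, ∑ k, c j * c k * (a t * M j k ^ t)
      = a t * ∑ j, ∑ k, c j * c k * M j k ^ t := by
    rw [Finset.mul_sum]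
    refine Finset.sum_congr rfl fun j _ => ?_
    rw [Finset.mul_sum]
    exact Finset.sum_congr rfl fun k _ => by ring
  rw [h3]
  exact mul_nonneg (ha t) ((hM.pow t).2 c)

lemma PSDMat.finsetSum {m : ℕ} {ι : Type*} (s : Finset ι) (M : ι → Fin m → Fin m → ℝ)
    (h : ∀ i ∈ s, PSDMat (M i)) : PSDMat (fun j k => ∑ i ∈ s, M i j k) := by
  refine ⟨fun j k => Finset.sum_congr rfl fun i hi => (h i hi).1 j k, fun c => ?_⟩
  have key : ∑ j, ∑ k, c j * c k * ∑ i ∈ s, M i j k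
      = ∑ i ∈ s, ∑ j, ∑ k, c j * c k * M i j k := by
    simp_rw [Finset.mul_sum]
    rw [show (∑ j, ∑ k, ∑ i ∈ s, c j * c k * M i j k)
        = ∑ j, ∑ i ∈ s, ∑ k, c j * c k * M i j k from
      Finset.sum_congr rfl fun j _ => Finset.sum_comm]
    exact Finset.sum_comm
  rw [key]
  exact Finset.sum_nonneg fun i hi => (h i hi).2 c

lemma psdMat_inner {m : ℕ} {E : Type*} [NormedAddCommGroup E] [InnerProductSpace ℝ E]
    (v : Fin m → E) : PSDMat (fun j k => (inner ℝ (v j) (v k) : ℝ)) := by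
  refine ⟨fun j k => real_inner_comm _ _, fun c => ?_⟩
  have key : ∑ j, ∑ k, c j * c k * (inner ℝ (v j) (v k) : ℝ)
      = (inner ℝ (∑ j, c j • v j) (∑ k, c k • v k) : ℝ) := by
    rw [sum_inner]
    refine Finset.sum_congr rfl fun j _ => ?_
    rw [inner_sum]
    refine Finset.sum_congr rfl fun k _ => ?_
    rw [real_inner_smul_left, real_inner_smul_right]
    ring
  rw [key]
  exact real_inner_self_nonneg

lemma continuous_tsumPow (a : ℕ → ℝ) (ha : ∀ t, 0 ≤ a t)
    (hsum : ∀ x : ℝ, Summable fun t => a t * x ^ t) :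
    Continuous fun x : ℝ => ∑' t : ℕ, a t * x ^ t := by
  rw [continuous_iff_continuousAt]
  intro x
  have hxR : x ∈ Metric.ball (0 : ℝ) (|x| + 1) := by
    simp only [Metric.mem_ball, Real.dist_eq, sub_zero]
    linarith [abs_nonneg x]
  have hcont : ContinuousOn (fun y : ℝ => ∑' t : ℕ, a t * y ^ t) (Metric.ball 0 (|x| + 1)) := by
    refine continuousOn_tsum (fun t => (continuous_const.mul (continuous_pow t)).continuousOn)
      (hsum (|x| + 1)) (fun t y hy => ?_)
    have hy' : |y| ≤ |x| + 1 := by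
      simp only [Metric.mem_ball, Real.dist_eq, sub_zero] at hy
      linarith
    have h1 : 0 ≤ |x| + 1 := by positivity
    calc ‖a t * y ^ t‖ = a t * |y| ^ t := by
          rw [norm_mul, norm_pow, Real.norm_eq_abs, Real.norm_eq_abs, abs_of_nonneg (ha t)]
      _ ≤ a t * (|x| + 1) ^ t := by
          exact mul_le_mul_of_nonneg_left (pow_le_pow_left₀ (abs_nonneg y) hy' t) (ha t)
  exact hcont.continuousAt (Metric.isOpen_ball.mem_nhds hxR)

lemma taylorAbs_coeff_nonneg (σ : ℝ → ℝ) (t : ℕ) :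
    0 ≤ |iteratedDeriv t σ 0| / (t.factorial : ℝ) := by positivity

lemma continuous_taylorAbs (σ : ℝ → ℝ)
    (hsum : ∀ x : ℝ, Summable fun t : ℕ => (|iteratedDeriv t σ 0| / (t.factorial : ℝ)) * x ^ t) :
    Continuous (taylorAbs σ) :=
  continuous_tsumPow _ (taylorAbs_coeff_nonneg σ) hsum

lemma psdMat_taylorAbs {m : ℕ} {M : Fin m → Fin m → ℝ} (hM : PSDMat M) (σ : ℝ → ℝ)
    (hsum : ∀ x : ℝ, Summable fun t : ℕ => (|iteratedDeriv t σ 0| / (t.factorial : ℝ)) * x ^ t) :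
    PSDMat (fun j k => taylorAbs σ (M j k)) :=
  hM.tsumPow _ (taylorAbs_coeff_nonneg σ) hsum

lemma compTail_psd {m : ℕ} (f : ℕ → ℝ → ℝ) :
    ∀ L : ℕ,
      (∀ i, 2 ≤ i → i ≤ L → ∀ M : Fin m → Fin m → ℝ, PSDMat M →
        PSDMat fun j k => f i (M j k)) →
      ∀ M : Fin m → Fin m → ℝ, PSDMat M → PSDMat fun j k => compTail f L (M j k) := by
  intro L
  induction L with
  | zero => intro _ M hM; simpa [compTail] using hM
  | succ L ih =>
    intro hf M hM
    cases L with
    | zero => simpa [compTail] using hM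
    | succ k =>
      have h1 := ih (fun i h2 hle M hM => hf i h2 (hle.trans (Nat.le_succ _)) M hM) M hM
      have h2 := hf (k + 2) (by omega) le_rfl _ h1
      show PSDMat fun j k' => (f (k + 2) ∘ compTail f (k + 1)) (M j k')
      exact h2

lemma compTail_continuous (f : ℕ → ℝ → ℝ) :
    ∀ L : ℕ, (∀ i, 2 ≤ i → i ≤ L → Continuous (f i)) → Continuous (compTail f L) := by
  intro L
  induction L with
  | zero => intro _; simpa [compTail] using continuous_id
  | succ L ih =>
    intro hf
    cases L with
    | zero => simpa [compTail] using continuous_id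
    | succ k =>
      have h1 := ih fun i h2 hle => hf i h2 (hle.trans (Nat.le_succ _))
      have h2 := hf (k + 2) (by omega) le_rfl
      show Continuous (f (k + 2) ∘ compTail f (k + 1))
      exact h2.comp h1

/-- Let `N ≥ 2` and `σ₁, …, σ_N : ℝ → ℝ` each be equal on `ℝ` to its
Taylor series at `0`, with `f_i(x) := ∑_t (|σ_i^{(t)}(0)|/t!) x^t` convergent on all of `ℝ`.
Then `K_N` is a positive semi-definite kernel on `I = (S^{d-1})^n`: it is symmetric and
continuous, and all its Gram matrices are positive semi-definite. -/
theorem stmt_10 (d n N : ℕ) (hd : 2 ≤ d) (hn : 1 ≤ n) (hN : 2 ≤ N)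
    (σ : ℕ → ℝ → ℝ)
    (hσ : ∀ i : ℕ, 1 ≤ i → i ≤ N → ∀ u : ℝ,
      HasSum (fun t : ℕ => (iteratedDeriv t (σ i) 0 / (t.factorial : ℝ)) * u ^ t) (σ i u))
    (hconv : ∀ i : ℕ, 1 ≤ i → i ≤ N → ∀ x : ℝ,
      Summable fun t : ℕ => (|iteratedDeriv t (σ i) 0| / (t.factorial : ℝ)) * x ^ t) :
    (∀ X X' : Fin n → Metric.sphere (0 : EuclideanSpace ℝ (Fin d)) 1,
        cnnKernel d n N σ X X' = cnnKernel d n N σ X' X) ∧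
    Continuous (fun p : (Fin n → Metric.sphere (0 : EuclideanSpace ℝ (Fin d)) 1) ×
        (Fin n → Metric.sphere (0 : EuclideanSpace ℝ (Fin d)) 1) =>
      cnnKernel d n N σ p.1 p.2) ∧
    (∀ m : ℕ, 1 ≤ m →
      ∀ (X : Fin m → (Fin n → Metric.sphere (0 : EuclideanSpace ℝ (Fin d)) 1))
        (c : Fin m → ℝ),
        0 ≤ ∑ j : Fin m, ∑ k : Fin m, c j * c k * cnnKernel d n N σ (X j) (X k)) := by
  refine ⟨?_, ?_, ?_⟩
  · intro X X'
    simp only [cnnKernel]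
    congr 1
    refine Finset.sum_congr rfl fun j _ => ?_
    rw [real_inner_comm]
  · have hc2 : Continuous (compTail (fun i => taylorAbs (σ i)) N) :=
      compTail_continuous _ N fun i h2 hle => continuous_taylorAbs _ (hconv i (by omega) hle)
    have hc1 : Continuous (taylorAbs (σ 1)) :=
      continuous_taylorAbs _ (hconv 1 le_rfl (by omega))
    refine hc2.comp ?_
    refine continuous_finset_sum _ fun j _ => ?_
    refine hc1.comp ?_
    exact Continuous.inner
      (continuous_subtype_val.comp ((continuous_apply j).comp continuous_fst))
      (continuous_subtype_val.comp ((continuous_apply j).comp continuous_snd))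
  · intro m hm X c
    have hMbase : PSDMat (fun j k : Fin m => ∑ i : Fin n,
        taylorAbs (σ 1) ((inner ℝ ((X j i : EuclideanSpace ℝ (Fin d)))
          ((X k i : EuclideanSpace ℝ (Fin d))) : ℝ))) := by
      refine PSDMat.finsetSum _ _ fun i _ => ?_
      exact psdMat_taylorAbs (psdMat_inner fun j => (X j i : EuclideanSpace ℝ (Fin d))) _
        (hconv 1 le_rfl (by omega))
    have hfin := compTail_psd (fun i => taylorAbs (σ i)) N
      (fun i h2 hle M hM => psdMat_taylorAbs hM _ (hconv i (by omega) hle)) _ hMbase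
    simpa [cnnKernel] using hfin.2 c
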